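/- Let n ≥ 1. For every A ∈ GL(n,ℤ), the matrix B_{D_A} vanishes, where D_A := [[A,0],[0,(Aᵀ)⁻¹]] ∈ O(n,n,ℤ); consequently the 3-cocycle m vanishes on the subgroup D(GL(n,ℤ)): m_{D_A, D_B, D_C} = 0 for all A, B, C ∈ GL(n,ℤ). -/
import Mathlib


open Matrix

/-- Square integer matrices of size `2n`. -/
abbrev Mat (n : ℕ) := Matrix (Fin (n + n)) (Fin (n + n)) ℤ

/-- The `2n × 2n` block matrix `[[A, B], [C, D]]`. -/
def fromB {n : ℕ} (A B C D : Matrix (Fin n) (Fin n) ℤ) : Mat n :=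
  Matrix.reindex finSumFinEquiv finSumFinEquiv (Matrix.fromBlocks A B C D)

/-- The block matrix `I = [[0, Eₙ], [Eₙ, 0]]`. -/
def Imat (n : ℕ) : Mat n := fromB 0 1 1 0

/-- Membership in the integral split pseudo-orthogonal group `O^±(n,n,ℤ)`:
`Aᵀ I A = I` or `Aᵀ I A = -I`. -/
def IsOpm (n : ℕ) (A : Mat n) : Prop :=
  Aᵀ * Imat n * A = Imat n ∨ Aᵀ * Imat n * A = -Imat n

/-- The block matrix `J = [[0, 0], [Eₙ, 0]]`. -/
def Jmat (n : ℕ) : Mat n := fromB 0 0 1 0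

/-- The sign `iso(A) ∈ {1, -1}` with `Aᵀ I A = iso(A) • I` (for `A ∈ O^±(n,n,ℤ)`). -/
noncomputable def iso (n : ℕ) (A : Mat n) : ℤ :=
  if Aᵀ * Imat n * A = Imat n then 1 else -1

/-- For a (skew-symmetric) integer matrix `M`, its strictly lower triangular part
`M_low`, with `(M_low)ᵢⱼ = Mᵢⱼ` for `i > j` and `0` otherwise. -/
def lowm {N : ℕ} (M : Matrix (Fin N) (Fin N) ℤ) : Matrix (Fin N) (Fin N) ℤ :=
  Matrix.of fun i j => if j < i then M i j else 0

/-- The diagonal of a matrix, as a vector `M^{diag}`. -/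
def diagv {N : ℕ} (M : Matrix (Fin N) (Fin N) ℤ) : Fin N → ℤ := fun i => M i i

/-- The skew-symmetric matrix `B_A := iso(A)·J − Aᵀ J A`. -/
noncomputable def Bmat (n : ℕ) (A : Mat n) : Mat n := iso n A • Jmat n - Aᵀ * Jmat n * A

/-- The integer vector `-2·m_{A,B,C}`. -/
noncomputable def mint (n : ℕ) (A B C : Mat n) : Fin (n + n) → ℤ :=
  ((A⁻¹)ᵀ * (B⁻¹)ᵀ * (C⁻¹)ᵀ).mulVec
    (Cᵀ.mulVec (diagv (Bᵀ * lowm (Bmat n A) * B))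
      + diagv (Cᵀ * lowm (Bmat n (A * B)) * C)
      - iso n A • diagv (Cᵀ * lowm (Bmat n B) * C)
      - diagv (Cᵀ * Bᵀ * lowm (Bmat n A) * B * C))

/-- The 3-cocycle
`m_{A,B,C} := −(1/2)·(A⁻¹)ᵀ(B⁻¹)ᵀ(C⁻¹)ᵀ·( Cᵀ·(Bᵀ(B_A)_low B)^{diag} + (Cᵀ(B_{AB})_low C)^{diag}`
`− iso(A)·(Cᵀ(B_B)_low C)^{diag} − (CᵀBᵀ(B_A)_low B C)^{diag} )` as a vector in `ℝ^{2n}`. -/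
noncomputable def mvec (n : ℕ) (A B C : Mat n) : Fin (n + n) → ℝ :=
  fun i => -(1 / 2 : ℝ) * (mint n A B C i : ℝ)

/-- The block matrix `D_A := [[A,0],[0,(Aᵀ)⁻¹]]`. -/
noncomputable def Dmat (n : ℕ) (A : Matrix (Fin n) (Fin n) ℤ) : Mat n :=
  fromB A 0 0 (Aᵀ)⁻¹


lemma fromB_mul {n : ℕ} (A B C D A' B' C' D' : Matrix (Fin n) (Fin n) ℤ) :
    fromB A B C D * fromB A' B' C' D' =
      fromB (A*A'+B*C') (A*B'+B*D') (C*A'+D*C') (C*B'+D*D') := by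
  simp [fromB, Matrix.reindex_apply, Matrix.submatrix_mul_equiv, Matrix.fromBlocks_multiply]

lemma fromB_transpose {n : ℕ} (A B C D : Matrix (Fin n) (Fin n) ℤ) :
    (fromB A B C D)ᵀ = fromB Aᵀ Cᵀ Bᵀ Dᵀ := by
  simp [fromB, Matrix.transpose_submatrix, Matrix.fromBlocks_transpose]

lemma Dmat_transpose {n : ℕ} (A : Matrix (Fin n) (Fin n) ℤ) :
    (Dmat n A)ᵀ = fromB Aᵀ 0 0 A⁻¹ := by
  rw [Dmat, fromB_transpose]
  simp [Matrix.transpose_nonsing_inv]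

lemma DID {n : ℕ} (A : Matrix (Fin n) (Fin n) ℤ) (hA : IsUnit A.det) :
    (Dmat n A)ᵀ * Imat n * Dmat n A = Imat n := by
  rw [Dmat_transpose, Imat, Dmat, fromB_mul, fromB_mul]
  simp [Matrix.mul_nonsing_inv _ (Matrix.det_transpose A ▸ hA),
    Matrix.nonsing_inv_mul _ hA]

lemma DJD {n : ℕ} (A : Matrix (Fin n) (Fin n) ℤ) (hA : IsUnit A.det) :
    (Dmat n A)ᵀ * Jmat n * Dmat n A = Jmat n := by
  rw [Dmat_transpose, Jmat, Dmat, fromB_mul, fromB_mul]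
  simp [Matrix.nonsing_inv_mul _ hA]

lemma iso_Dmat {n : ℕ} (A : Matrix (Fin n) (Fin n) ℤ) (hA : IsUnit A.det) :
    iso n (Dmat n A) = 1 := by
  rw [iso, if_pos (DID A hA)]

lemma Bmat_Dmat {n : ℕ} (A : Matrix (Fin n) (Fin n) ℤ) (hA : IsUnit A.det) :
    Bmat n (Dmat n A) = 0 := by
  rw [Bmat, iso_Dmat A hA, DJD A hA, one_smul, sub_self]

lemma Dmat_mul {n : ℕ} (A B : Matrix (Fin n) (Fin n) ℤ) :
    Dmat n A * Dmat n B = Dmat n (A * B) := by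
  rw [Dmat, Dmat, Dmat, fromB_mul]
  simp [Matrix.transpose_mul, Matrix.mul_inv_rev]

lemma diagv_zero {N : ℕ} : diagv (0 : Matrix (Fin N) (Fin N) ℤ) = 0 := by
  funext i; simp [diagv]

lemma lowm_zero {N : ℕ} : lowm (0 : Matrix (Fin N) (Fin N) ℤ) = 0 := by
  ext i j; simp [lowm]

/-- For every `A ∈ GL(n,ℤ)`, the matrix `B_{D_A}` vanishes, where
`D_A := [[A,0],[0,(Aᵀ)⁻¹]] ∈ O(n,n,ℤ)`; consequently the 3-cocycle `m` vanishes on the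
subgroup `D(GL(n,ℤ))`: `m_{D_A,D_B,D_C} = 0` for all `A, B, C ∈ GL(n,ℤ)`. -/
theorem statement16 (n : ℕ) (hn : 1 ≤ n) (A B C : Matrix (Fin n) (Fin n) ℤ)
    (hA : IsUnit A.det) (hB : IsUnit B.det) (hC : IsUnit C.det) :
    Bmat n (Dmat n A) = 0 ∧ mvec n (Dmat n A) (Dmat n B) (Dmat n C) = 0 := by
  refine ⟨Bmat_Dmat A hA, ?_⟩
  have hmint : mint n (Dmat n A) (Dmat n B) (Dmat n C) = 0 := by
    rw [mint, Dmat_mul, Bmat_Dmat A hA, Bmat_Dmat B hB,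
      Bmat_Dmat (A * B) ((A.det_mul B).symm ▸ hA.mul hB), lowm_zero]
    simp [diagv_zero, Matrix.mulVec_zero]
  funext i
  simp [mvec, hmint]
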